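/- arXiv:1303.0153 — 5 statements merged into one kernel-verified Lean document; each statement's English description precedes it below -/
import Mathlib

section
/- Let I be an EI-category. Then the category dI, whose objects are pairs of morphisms (h1 : i ⟶ j, h2 : j ⟶ i) and whose morphisms from (h1, h2) to (k1 : i' ⟶ j', k2 : j' ⟶ i') are pairs (m1 : i' ⟶ i, m2 : j ⟶ j') making the evident two squares commute (m2 ∘ h1 ∘ m1 = k1 and m1 ∘ k2 ∘ m2 = h2), is a groupoid. -/
open CategoryTheory

/-- Objects of the category `dI`: pairs of opposing morphisms `h1 : i ⟶ j`, `h2 : j ⟶ i`. -/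
structure DObj (I : Type*) [Category I] where
  i : I
  j : I
  h1 : i ⟶ j
  h2 : j ⟶ i

/-- Morphisms of `dI` from `(h1, h2)` to `(k1, k2)`: pairs `(m1 : i' ⟶ i, m2 : j ⟶ j')`
making the two evident squares commute. -/
@[ext]
structure DHom {I : Type*} [Category I] (A B : DObj I) where
  m1 : B.i ⟶ A.i
  m2 : A.j ⟶ B.j
  w1 : m1 ≫ A.h1 ≫ m2 = B.h1
  w2 : m2 ≫ B.h2 ≫ m1 = A.h2

instance (I : Type*) [Category I] : Category (DObj I) where
  Hom := DHom
  id A := ⟨𝟙 _, 𝟙 _, by simp, by simp⟩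
  comp {A B C} f g :=
    ⟨g.m1 ≫ f.m1, f.m2 ≫ g.m2, by
      simp only [Category.assoc]
      slice_lhs 2 4 => rw [f.w1]
      simpa using g.w1, by
      simp only [Category.assoc]
      slice_lhs 2 4 => rw [g.w2]
      simpa using f.w2⟩
  id_comp f := by apply DHom.ext <;> simp [CategoryStruct.comp, CategoryStruct.id]
  comp_id f := by apply DHom.ext <;> simp [CategoryStruct.comp, CategoryStruct.id]
  assoc f g h := by apply DHom.ext <;> simp [CategoryStruct.comp]


private lemma isIso_of_comp_isos {C : Type*} [Category C] {X Y : C} (m : X ⟶ Y)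
    {t s : Y ⟶ X} (h1 : IsIso (m ≫ t)) (h2 : IsIso (s ≫ m)) : IsIso m := by
  have hmono : Mono m := by
    constructor
    intro Z a b hab
    have : a ≫ m ≫ t = b ≫ m ≫ t := by rw [← Category.assoc, hab, Category.assoc]
    exact (cancel_mono (m ≫ t)).mp this
  have hsplit : IsSplitEpi m := ⟨⟨⟨inv (s ≫ m) ≫ s, by simp⟩⟩⟩
  exact isIso_of_mono_of_isSplitEpi m

/-- If `I` is an EI-category, then `dI` is a groupoid, i.e. every morphism
of `dI` is an isomorphism. -/
theorem stmt_1 {I : Type*} [Category I]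
    (hEI : ∀ (i : I) (f : i ⟶ i), IsIso f)
    {A B : DObj I} (f : A ⟶ B) : IsIso f := by
  have hm1 : IsIso f.m1 := by
    refine isIso_of_comp_isos f.m1 (t := A.h1 ≫ f.m2 ≫ B.h2) (s := A.h1 ≫ f.m2 ≫ B.h2) ?_ ?_
    · have : f.m1 ≫ A.h1 ≫ f.m2 ≫ B.h2 = B.h1 ≫ B.h2 := by
        rw [← Category.assoc, ← Category.assoc, Category.assoc f.m1, f.w1]
      rw [this]; exact hEI _ _
    · have : (A.h1 ≫ f.m2 ≫ B.h2) ≫ f.m1 = A.h1 ≫ A.h2 := by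
        simp only [Category.assoc]; rw [f.w2]
      rw [this]; exact hEI _ _
  have hm2 : IsIso f.m2 := by
    refine isIso_of_comp_isos f.m2 (t := B.h2 ≫ f.m1 ≫ A.h1) (s := B.h2 ≫ f.m1 ≫ A.h1) ?_ ?_
    · have : f.m2 ≫ B.h2 ≫ f.m1 ≫ A.h1 = A.h2 ≫ A.h1 := by
        rw [← Category.assoc, ← Category.assoc, Category.assoc f.m2, f.w2]
      rw [this]; exact hEI _ _
    · have : (B.h2 ≫ f.m1 ≫ A.h1) ≫ f.m2 = B.h2 ≫ B.h1 := by
        simp only [Category.assoc]; rw [f.w1]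
      rw [this]; exact hEI _ _
  refine ⟨⟨⟨inv f.m1, inv f.m2, ?_, ?_⟩, ?_, ?_⟩⟩
  · rw [← f.w1]; simp
  · rw [← f.w2]; simp
  · apply DHom.ext <;> simp [CategoryStruct.comp, CategoryStruct.id]
  · apply DHom.ext <;> simp [CategoryStruct.comp, CategoryStruct.id]
end

section
/- Let I be an EI-category and let h : i ⟶ i and k : j ⟶ j be endomorphisms. Then the objects (1_i, h) and (1_j, k) lie in the same connected component of the groupoid dI if and only if h and k are isomorphic as objects of the endomorphism category E(I), i.e. there exists an isomorphism m : i ⟶ j with m ∘ h = k ∘ m. -/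
open CategoryTheory

section Aux

variable {I : Type*} [Category I]

/-- In an EI-category, a morphism with a right inverse is an isomorphism. -/
lemma aux_iso_of_comp_eq_id (hEI : ∀ (i : I) (f : i ⟶ i), IsIso f)
    {x y : I} (a : x ⟶ y) (b : y ⟶ x) (hab : a ≫ b = 𝟙 x) : IsIso a := by
  have h1 : IsIso (b ≫ a) := hEI _ _
  have h2 : (b ≫ a) ≫ (b ≫ a) = (b ≫ a) ≫ 𝟙 y := by
    rw [Category.comp_id]
    rw [Category.assoc, ← Category.assoc a b, hab, Category.id_comp]
  have h3 : b ≫ a = 𝟙 y := by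
    rwa [cancel_epi (b ≫ a)] at h2
  exact ⟨b, hab, h3⟩

/-- The invariant relation: the composites `h1 ≫ h2` are conjugate. -/
def DRel (X Y : DObj I) : Prop :=
  ∃ m : X.i ⟶ Y.i, IsIso m ∧ (X.h1 ≫ X.h2) ≫ m = m ≫ (Y.h1 ≫ Y.h2)

lemma DRel.refl (X : DObj I) : DRel X X :=
  ⟨𝟙 _, inferInstance, by simp⟩

lemma DRel.symm {X Y : DObj I} : DRel X Y → DRel Y X := by
  rintro ⟨m, hm, hcomm⟩
  refine ⟨inv m, inferInstance, ?_⟩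
  rw [← cancel_epi m, ← Category.assoc, ← hcomm]
  simp

lemma DRel.trans {X Y Z : DObj I} : DRel X Y → DRel Y Z → DRel X Z := by
  rintro ⟨m, hm, hcomm⟩ ⟨n, hn, hcomm'⟩
  refine ⟨m ≫ n, inferInstance, ?_⟩
  rw [← Category.assoc, hcomm, Category.assoc, hcomm', Category.assoc]

lemma DRel.ofHom (hEI : ∀ (i : I) (f : i ⟶ i), IsIso f)
    {X Y : DObj I} (f : DHom X Y) : DRel X Y := by
  have hint : f.m1 ≫ (X.h1 ≫ X.h2) = (Y.h1 ≫ Y.h2) ≫ f.m1 := by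
    conv_lhs => rw [← f.w2]
    slice_lhs 1 3 => rw [f.w1]
  have hiso : IsIso f.m1 := by
    have key : f.m1 ≫ (X.h1 ≫ f.m2 ≫ Y.h2 ≫ inv (Y.h1 ≫ Y.h2)) = 𝟙 Y.i := by
      have hw : f.m1 ≫ X.h1 ≫ f.m2 = Y.h1 := f.w1
      slice_lhs 1 3 => rw [hw]
      simp
    exact aux_iso_of_comp_eq_id hEI _ _ key
  refine ⟨inv f.m1, inferInstance, ?_⟩
  rw [IsIso.eq_inv_comp, ← Category.assoc, hint]
  simp

lemma drel_of_zigzag (hEI : ∀ (i : I) (f : i ⟶ i), IsIso f)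
    {X Y : DObj I} (hz : Zigzag X Y) : DRel X Y := by
  induction hz with
  | refl => exact DRel.refl _
  | tail _ hzag ih =>
    refine ih.trans ?_
    rcases hzag with ⟨⟨f⟩⟩ | ⟨⟨g⟩⟩
    · exact DRel.ofHom hEI f
    · exact (DRel.ofHom hEI g).symm

end Aux

/-- Let `I` be an EI-category, `h : i ⟶ i`, `k : j ⟶ j` endomorphisms.
The objects `(1_i, h)` and `(1_j, k)` of `dI` lie in the same connected component (zigzag)
iff `h` and `k` are isomorphic in the endomorphism category, i.e. there is an isomorphism
`m : i ⟶ j` with `m ∘ h = k ∘ m`. -/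
theorem stmt_2 {I : Type*} [Category I]
    (hEI : ∀ (i : I) (f : i ⟶ i), IsIso f)
    {i j : I} (h : i ⟶ i) (k : j ⟶ j) :
    Zigzag (⟨i, i, 𝟙 i, h⟩ : DObj I) (⟨j, j, 𝟙 j, k⟩ : DObj I) ↔
      ∃ m : i ⟶ j, IsIso m ∧ h ≫ m = m ≫ k := by
  constructor
  · intro hz
    have hR := drel_of_zigzag hEI hz
    obtain ⟨m, hm, hcomm⟩ := hR
    refine ⟨m, hm, ?_⟩
    simpa using hcomm
  · rintro ⟨m, hm, hcomm⟩
    refine Relation.ReflTransGen.single (Or.inl ⟨?_⟩)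
    exact ⟨inv m, m, by simp, by
      show m ≫ k ≫ inv m = h
      rw [← Category.assoc, ← hcomm, Category.assoc, IsIso.hom_inv_id, Category.comp_id]⟩
end

section
/- Let I be a category and define an equivalence relation ∼ on the disjoint union of the endomorphism sets I(i,i) over all objects i, generated by m1 ∘ m2 ∼ m2 ∘ m1 for all composable pairs m1 : i ⟶ j, m2 : j ⟶ i. Then two objects (1_i, h) and (1_j, k) of dI lie in the same connected component of dI if and only if h ∼ k. -/
open CategoryTheory

/-- The generating relation on the disjoint union of the endomorphism sets of `I`:
`m1 ∘ m2 ∼ m2 ∘ m1` for composable `m1 : i ⟶ j`, `m2 : j ⟶ i`. -/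
def endRel (I : Type*) [Category I] (x y : Σ i : I, i ⟶ i) : Prop :=
  ∃ (m1 : x.1 ⟶ y.1) (m2 : y.1 ⟶ x.1), x.2 = m1 ≫ m2 ∧ y.2 = m2 ≫ m1

/-- Map a `DObj` to the endomorphism `h1 ≫ h2` at its first object. -/
def phiObj {I : Type*} [Category I] (A : DObj I) : Σ i : I, i ⟶ i :=
  ⟨A.i, A.h1 ≫ A.h2⟩

lemma hom_endRel {I : Type*} [Category I] {A B : DObj I} (f : A ⟶ B) :
    endRel I (phiObj B) (phiObj A) := by
  refine ⟨f.m1, A.h1 ≫ f.m2 ≫ B.h2, ?_, ?_⟩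
  · have := f.w1
    dsimp [phiObj]
    rw [← f.w1]
    simp
  · dsimp [phiObj]
    rw [← f.w2]
    simp

lemma zag_eqvGen {I : Type*} [Category I] {A B : DObj I} (z : Zag A B) :
    Relation.EqvGen (endRel I) (phiObj A) (phiObj B) := by
  rcases z with ⟨⟨f⟩⟩ | ⟨⟨f⟩⟩
  · exact Relation.EqvGen.symm _ _ (Relation.EqvGen.rel _ _ (hom_endRel f))
  · exact Relation.EqvGen.rel _ _ (hom_endRel f)

lemma zigzag_eqvGen {I : Type*} [Category I] {A B : DObj I} (z : Zigzag A B) :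
    Relation.EqvGen (endRel I) (phiObj A) (phiObj B) := by
  induction z with
  | refl => exact Relation.EqvGen.refl _
  | tail _ hz ih => exact Relation.EqvGen.trans _ _ _ ih (zag_eqvGen hz)

/-- The object `(1_i, h)` of `dI` attached to an endomorphism. -/
def psiObj {I : Type*} [Category I] (x : Σ i : I, i ⟶ i) : DObj I :=
  ⟨x.1, x.1, 𝟙 x.1, x.2⟩

lemma eqvGen_zigzag {I : Type*} [Category I] {x y : Σ i : I, i ⟶ i}
    (e : Relation.EqvGen (endRel I) x y) : Zigzag (psiObj x) (psiObj y) := by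
  induction e with
  | rel x y hxy =>
    obtain ⟨m1, m2, hx, hy⟩ := hxy
    let C : DObj I := ⟨x.1, y.1, m1, m2⟩
    have f : psiObj x ⟶ C := ⟨𝟙 _, m1, by simp [psiObj, C], by simp [psiObj, C, hx]⟩
    have g : psiObj y ⟶ C := ⟨m1, 𝟙 _, by simp [psiObj, C], by simp [psiObj, C, hy]⟩
    exact Relation.ReflTransGen.trans
      (Relation.ReflTransGen.single (Or.inl ⟨f⟩))
      (Relation.ReflTransGen.single (Or.inr ⟨g⟩))
  | refl => exact Relation.ReflTransGen.refl
  | symm _ _ _ ih => exact zigzag_symmetric.symm _ _ ih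
  | trans _ _ _ _ _ ih1 ih2 => exact ih1.trans ih2

/-- For any category `I`, the objects `(1_i, h)` and `(1_j, k)` of `dI` lie
in the same connected component of `dI` iff `h ∼ k` for the equivalence relation generated
by `m1 ∘ m2 ∼ m2 ∘ m1`. -/
theorem stmt_3 {I : Type*} [Category I] {i j : I} (h : i ⟶ i) (k : j ⟶ j) :
    Zigzag (⟨i, i, 𝟙 i, h⟩ : DObj I) (⟨j, j, 𝟙 j, k⟩ : DObj I) ↔
      Relation.EqvGen (endRel I) ⟨i, h⟩ ⟨j, k⟩ := by
  constructor
  · intro z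
    have := zigzag_eqvGen z
    simpa [phiObj] using this
  · intro e
    have := eqvGen_zigzag e
    simpa [psiObj] using this
end

section
/- Let I be a finite skeletal EI-category. Then there is a linear ordering of the objects of I such that the ζ-matrix (ζ(i,j))_{i,j}, where ζ(i,j) = #I(i,j), is upper triangular with diagonal entries #G_i = #I(i,i). Consequently det(ζ) = ∏_i #G_i, and ζ is invertible over any commutative ring R in which ∏_i #G_i is invertible. -/
open CategoryTheory

/-- A finite skeletal EI-category admits a linear ordering of its objects
making the ζ-matrix `(#I(i,j))` upper triangular (its diagonal entries are the `#G_i` by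
definition); consequently its determinant is `∏ i, #G_i` and the matrix is invertible over
any commutative ring in which `∏ i, #G_i` is invertible. -/
theorem stmt_7 {I : Type*} [Category I] [Fintype I] [∀ i j : I, Fintype (i ⟶ j)]
    (hskel : Skeletal I) (hEI : ∀ (i : I) (f : i ⟶ i), IsIso f) :
    ∃ e : I ≃ Fin (Fintype.card I),
      (∀ a b : Fin (Fintype.card I), b < a → Nat.card (e.symm a ⟶ e.symm b) = 0) ∧
      (Matrix.of fun a b : Fin (Fintype.card I) =>
          ((Nat.card (e.symm a ⟶ e.symm b) : ℤ))).det
        = ∏ i : I, (Nat.card (i ⟶ i) : ℤ) ∧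
      ∀ (R : Type*) [CommRing R],
        IsUnit ((∏ i : I, (Nat.card (i ⟶ i) : ℕ) : ℕ) : R) →
          IsUnit (Matrix.of fun a b : Fin (Fintype.card I) =>
            ((Nat.card (e.symm a ⟶ e.symm b) : ℕ) : R)) := by
  classical
  letI P : PartialOrder I :=
    { le := fun i j => Nonempty (i ⟶ j)
      le_refl := fun i => ⟨𝟙 i⟩
      le_trans := fun i j k h1 h2 => ⟨h1.some ≫ h2.some⟩
      le_antisymm := by
        rintro i j ⟨f⟩ ⟨g⟩
        haveI h1 : IsIso (f ≫ g) := hEI _ _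
        haveI h2 : IsIso (g ≫ f) := hEI _ _
        have hr : f ≫ (g ≫ inv (f ≫ g)) = 𝟙 i := by
          rw [← Category.assoc]; simp
        have hl : (inv (g ≫ f) ≫ g) ≫ f = 𝟙 j := by
          rw [Category.assoc]; simp
        have heq : inv (g ≫ f) ≫ g = g ≫ inv (f ≫ g) := by
          calc inv (g ≫ f) ≫ g = (inv (g ≫ f) ≫ g) ≫ (f ≫ (g ≫ inv (f ≫ g))) := by
                rw [hr, Category.comp_id]
            _ = ((inv (g ≫ f) ≫ g) ≫ f) ≫ (g ≫ inv (f ≫ g)) := by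
                simp only [Category.assoc]
            _ = g ≫ inv (f ≫ g) := by rw [hl, Category.id_comp]
        haveI : IsIso f := ⟨g ≫ inv (f ≫ g), hr, by rw [← heq]; exact hl⟩
        exact hskel ⟨asIso f⟩ }
  letI : Fintype (LinearExtension I) := ‹Fintype I›
  have hcard : Fintype.card (LinearExtension I) = Fintype.card I := rfl
  let e0 := monoEquivOfFin (LinearExtension I) hcard
  let e : I ≃ Fin (Fintype.card I) :=
    { toFun := fun i => e0.symm (toLinearExtension i)
      invFun := fun a => (e0 a : I)
      left_inv := fun i => e0.apply_symm_apply _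
      right_inv := fun a => e0.symm_apply_apply _ }
  have hesymm : ∀ a, e.symm a = (e0 a : I) := fun a => rfl
  have key : ∀ a b : Fin (Fintype.card I), b < a →
      IsEmpty (e.symm a ⟶ e.symm b) := by
    intro a b hba
    by_contra h
    rw [not_isEmpty_iff] at h
    have hP : @LE.le I P.toLE (e0 a : I) (e0 b : I) := h
    have hle : (toLinearExtension ((e0 a : I)) : LinearExtension I)
        ≤ toLinearExtension ((e0 b : I)) := toLinearExtension.monotone hP
    have hle' : e0 a ≤ e0 b := hle
    exact absurd (e0.le_iff_le.mp hle') (not_le.mpr hba)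
  refine ⟨e, ?_, ?_, ?_⟩
  · intro a b hba
    haveI := key a b hba
    simp
  · rw [Matrix.det_of_upperTriangular]
    · simp only [Matrix.of_apply]
      exact Equiv.prod_comp e.symm (fun i : I => (Nat.card (i ⟶ i) : ℤ))
    · intro a b hba
      haveI := key a b hba
      simp [Matrix.BlockTriangular]
  · intro R _ hU
    rw [Matrix.isUnit_iff_isUnit_det]
    rw [Matrix.det_of_upperTriangular]
    · simp only [Matrix.of_apply]
      rw [Equiv.prod_comp e.symm (fun i : I => ((Nat.card (i ⟶ i) : ℕ) : R))]
      rw [Nat.cast_prod] at hU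
      exact hU
    · intro a b hba
      haveI := key a b hba
      simp
end

section
/- Let I be a finite EI-category with skeleton J of the endomorphism category E(I), and R a commutative ring in which the characteristic χ(I) = rad(∏_{i} #G_i) is invertible. Then the coefficients λ_{(j,k)} = Σ_{(i,h) ∈ J_0} Σ_{n ≥ 0} (−1)^n Σ (#[h_0]/#G_{i_0}) ⋯ (#[h_n]/#G_{i_n}), where the inner sum ranges over non-degenerate paths (i,h) = (i_0,h_0) ⟶ ⋯ ⟶ (i_n,h_n) = (j,k) in J, define the unique R-coweighting on J. -/
open CategoryTheory

/-- Objects of the endomorphism category `E(I)`: endomorphisms `h : i ⟶ i` of `I`. -/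
structure EObj (I : Type*) [Category I] where
  i : I
  h : i ⟶ i

/-- Morphisms of `E(I)` from `(i, h)` to `(j, k)`: morphisms `m : i ⟶ j` of `I` with
`m ∘ h = k ∘ m`. -/
@[ext]
structure EHom {I : Type*} [Category I] (x y : EObj I) where
  m : x.i ⟶ y.i
  w : x.h ≫ m = m ≫ y.h

instance (I : Type*) [Category I] : Category (EObj I) where
  Hom := EHom
  id x := ⟨𝟙 _, by simp⟩
  comp {x y z} f g := ⟨f.m ≫ g.m, by
    rw [← Category.assoc, f.w, Category.assoc, g.w, ← Category.assoc]⟩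
  id_comp f := by apply EHom.ext; simp [CategoryStruct.comp, CategoryStruct.id]
  comp_id f := by apply EHom.ext; simp [CategoryStruct.comp, CategoryStruct.id]
  assoc f g h := by apply EHom.ext; simp [CategoryStruct.comp]

open scoped Classical

variable {I : Type*} [Category I]

/-- The ratio `#[h] / #G_i` in `R`: the size of the conjugacy class of `h : i ⟶ i`
(elements `g` conjugate to `h` via an isomorphism `m`) times the inverse of `#G_i`. -/
noncomputable def classRatio (R : Type*) [CommRing R] (x : EObj I) : R :=
  ((Nat.card {g : x.i ⟶ x.i // ∃ m : x.i ⟶ x.i, IsIso m ∧ x.h ≫ m = m ≫ g} : ℕ) : R) *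
    Ring.inverse ((Nat.card (x.i ⟶ x.i) : ℕ) : R)

/-- Non-degenerate paths of length `n` from `x` to `y` in the skeleton `J ⊆ E(I)` cut out
by `P`: chains of `n` composable morphisms between pairwise distinct objects of `J`. -/
structure NDPath (P : EObj I → Prop) (x y : {z : EObj I // P z}) (n : ℕ) where
  obj : Fin (n + 1) → {z : EObj I // P z}
  hom : ∀ l : Fin n, ((obj l.castSucc).1 ⟶ (obj l.succ).1)
  src : obj 0 = x
  tgt : obj (Fin.last n) = y
  nondeg : Function.Injective obj

/-- The candidate coweighting: `λ_{(j,k)} = ∑_{(i,h) ∈ J} ∑_{n ≥ 0} (-1)^n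
∑_{non-degenerate paths (i,h) → ⋯ → (j,k)} (#[h_0]/#G_{i_0}) ⋯ (#[h_n]/#G_{i_n})`. -/
noncomputable def leinsterCoweighting (R : Type*) [CommRing R] (P : EObj I → Prop)
    (y : {z : EObj I // P z}) : R :=
  ∑ᶠ x : {z : EObj I // P z}, ∑ᶠ n : ℕ, (-1 : R) ^ n *
    ∑ᶠ p : NDPath P x y n, ∏ l : Fin (n + 1), classRatio R (p.obj l).1

section Aux

variable {I : Type*} [Category I] [Fintype I] [∀ i j : I, Fintype (i ⟶ j)]

noncomputable instance fintypeEHom (x y : EObj I) : Fintype (EHom x y) :=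
  Fintype.ofInjective (fun f => f.m) (fun f g h => EHom.ext h)

noncomputable instance : Fintype (EObj I) :=
  Fintype.ofInjective (fun x => (⟨x.i, x.h⟩ : Σ i : I, (i ⟶ i)))
    (by rintro ⟨i, h⟩ ⟨j, k⟩ e; simpa using e)

noncomputable instance (x y : EObj I) : Fintype (x ⟶ y) := inferInstanceAs (Fintype (EHom x y))

variable (P : EObj I → Prop)

noncomputable instance : Fintype {z : EObj I // P z} := Subtype.fintype _

end Aux
lemma isUnit_nat_of_primes (R : Type*) [CommRing R] :
    ∀ n : ℕ, n ≠ 0 → (∀ p : ℕ, p.Prime → p ∣ n → IsUnit ((p : ℕ) : R)) →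
      IsUnit ((n : ℕ) : R) := by
  intro n
  induction n using Nat.strong_induction_on with
  | _ n ih =>
    intro hn hp
    rcases eq_or_ne n 1 with rfl | h1
    · simp
    · have hpf := Nat.minFac_prime h1
      obtain ⟨m, hm⟩ := Nat.minFac_dvd n
      have hm0 : m ≠ 0 := fun h => hn (by rw [hm, h, mul_zero])
      have hmn : m ∣ n := by
        have := dvd_mul_left m n.minFac
        rwa [← hm] at this
      have hmlt : m < n := by
        rw [hm]
        have h1m : 1 * m < n.minFac * m :=
          Nat.mul_lt_mul_of_lt_of_le hpf.one_lt (le_refl m) (Nat.pos_of_ne_zero hm0)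
        simpa using h1m
      have hu1 : IsUnit ((n.minFac : ℕ) : R) := hp _ hpf (Nat.minFac_dvd n)
      have hu2 : IsUnit ((m : ℕ) : R) := ih m hmlt hm0
        (fun p pp pd => hp p pp (pd.trans hmn))
      rw [hm]; push_cast; exact hu1.mul hu2

section Grp

variable {I : Type*} [Category I] [Fintype I] [∀ i j : I, Fintype (i ⟶ j)]

lemma diag_mul_classRatio
    (hEI : ∀ (i : I) (f : i ⟶ i), IsIso f)
    (R : Type*) [CommRing R]
    (hchar : ∀ p : ℕ, p.Prime → (∃ i : I, p ∣ Nat.card (i ⟶ i)) → IsUnit ((p : ℕ) : R))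
    (x : EObj I) :
    ((Nat.card (EHom x x) : ℕ) : R) * classRatio R x = 1 := by
  letI : Fintype (End x.i) := inferInstanceAs (Fintype (x.i ⟶ x.i))
  have hall : ∀ a : End x.i, IsUnit a := fun a => (isUnit_iff_isIso a).2 (hEI x.i a)
  set M := End x.i
  have eu : Mˣ ≃ M :=
    ⟨fun u => (u : M), fun a => (hall a).unit, fun u => Units.ext (hall _).unit_spec,
      fun a => (hall a).unit_spec⟩
  letI : Fintype Mˣ := Fintype.ofEquiv M eu.symm
  letI : Fintype (ConjAct Mˣ) := inferInstanceAs (Fintype Mˣ)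
  set h' : M := x.h with hh'
  -- conjugacy class is the orbit of the conjugation action of `Mˣ` on `M`
  have e1 : {g : x.i ⟶ x.i // ∃ m : x.i ⟶ x.i, IsIso m ∧ x.h ≫ m = m ≫ g} ≃
      MulAction.orbit (ConjAct Mˣ) h' := by
    apply Equiv.subtypeEquivRight
    intro g
    rw [MulAction.mem_orbit_iff]
    constructor
    · rintro ⟨m, him, hw⟩
      have hw' : ((hall m).unit : M) * h' = (End.of g) * ((hall m).unit : M) := by
        rw [(hall m).unit_spec]; exact hw
      refine ⟨ConjAct.toConjAct ((hall m).unit), ?_⟩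
      rw [ConjAct.units_smul_def, ConjAct.ofConjAct_toConjAct,
        Units.mul_inv_eq_iff_eq_mul]
      exact hw'
    · rintro ⟨u, hu⟩
      rw [ConjAct.units_smul_def, Units.mul_inv_eq_iff_eq_mul] at hu
      exact ⟨((ConjAct.ofConjAct u : Mˣ) : M),
        (isUnit_iff_isIso _).1 (ConjAct.ofConjAct u).isUnit, hu⟩
  -- the endomorphisms of `(i, h)` in `E(I)` form the stabilizer
  have e2 : EHom x x ≃ MulAction.stabilizer (ConjAct Mˣ) h' := by
    refine ⟨fun f => ⟨ConjAct.toConjAct ((hall f.m).unit), ?_⟩,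
      fun u => ⟨((ConjAct.ofConjAct u.1 : Mˣ) : M), ?_⟩, fun f => ?_, fun u => ?_⟩
    · show ConjAct.toConjAct ((hall f.m).unit) • h' = h'
      rw [ConjAct.units_smul_def, ConjAct.ofConjAct_toConjAct,
        Units.mul_inv_eq_iff_eq_mul, (hall f.m).unit_spec]
      exact f.w
    · have hu := u.2
      rw [MulAction.mem_stabilizer_iff, ConjAct.units_smul_def,
        Units.mul_inv_eq_iff_eq_mul] at hu
      exact hu
    · apply EHom.ext
      exact (hall f.m).unit_spec
    · apply Subtype.ext
      have h1 : (hall ((ConjAct.ofConjAct u.1 : Mˣ) : M)).unit = ConjAct.ofConjAct u.1 :=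
        Units.ext (hall _).unit_spec
      show ConjAct.toConjAct _ = u.1
      rw [h1, ConjAct.toConjAct_ofConjAct]
  letI : Fintype (MulAction.orbit (ConjAct Mˣ) h') := Fintype.ofFinite _
  letI : Fintype (MulAction.stabilizer (ConjAct Mˣ) h') := Fintype.ofFinite _
  have hos := MulAction.card_orbit_mul_card_stabilizer_eq_card_group (ConjAct Mˣ) h'
  have hcardu : Fintype.card (ConjAct Mˣ) = Nat.card (x.i ⟶ x.i) := by
    rw [← Nat.card_eq_fintype_card]
    exact Nat.card_congr ((ConjAct.toConjAct (G := Mˣ)).symm.toEquiv.trans eu)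
  have hGne : Nat.card (x.i ⟶ x.i) ≠ 0 := by
    have hne : Nonempty (x.i ⟶ x.i) := ⟨𝟙 x.i⟩
    have : Nat.card (x.i ⟶ x.i) = Fintype.card (x.i ⟶ x.i) := Nat.card_eq_fintype_card
    rw [this]; exact Fintype.card_ne_zero
  have hGunit : IsUnit ((Nat.card (x.i ⟶ x.i) : ℕ) : R) :=
    isUnit_nat_of_primes R _ hGne (fun p pp pd => hchar p pp ⟨x.i, pd⟩)
  have hmul : Nat.card (EHom x x) *
      Nat.card {g : x.i ⟶ x.i // ∃ m : x.i ⟶ x.i, IsIso m ∧ x.h ≫ m = m ≫ g}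
      = Nat.card (x.i ⟶ x.i) := by
    rw [Nat.card_congr e1, Nat.card_congr e2, Nat.card_eq_fintype_card,
      Nat.card_eq_fintype_card, mul_comm, ← hcardu]
    exact hos
  unfold classRatio
  rw [← mul_assoc, ← Nat.cast_mul, hmul]
  exact Ring.mul_inverse_cancel _ hGunit

lemma isUnit_diag
    (hEI : ∀ (i : I) (f : i ⟶ i), IsIso f)
    (R : Type*) [CommRing R]
    (hchar : ∀ p : ℕ, p.Prime → (∃ i : I, p ∣ Nat.card (i ⟶ i)) → IsUnit ((p : ℕ) : R))
    (x : EObj I) : IsUnit ((Nat.card (EHom x x) : ℕ) : R) :=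
  IsUnit.of_mul_eq_one _ (diag_mul_classRatio hEI R hchar x)

end Grp
lemma exists_rel_min {α : Type*} (r : α → α → Prop)
    (htr : ∀ {a b c}, r a b → r b c → r a c)
    (hirr : ∀ a, ¬ r a a) :
    ∀ s : Finset α, s.Nonempty → ∃ y ∈ s, ∀ x ∈ s, ¬ r x y := by
  intro s
  induction s using Finset.strongInductionOn with
  | _ s ih =>
    intro hs
    obtain ⟨y, hy⟩ := hs
    by_cases hmin : ∀ x ∈ s, ¬ r x y
    · exact ⟨y, hy, hmin⟩
    · push_neg at hmin
      obtain ⟨x, hx, hxy⟩ := hmin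
      have hss : s.filter (fun z => r z y) ⊂ s :=
        Finset.filter_ssubset.2 ⟨y, hy, hirr y⟩
      obtain ⟨y', hy', hmin'⟩ := ih _ hss ⟨x, Finset.mem_filter.2 ⟨hx, hxy⟩⟩
      have hy'y : r y' y := (Finset.mem_filter.1 hy').2
      refine ⟨y', (Finset.mem_filter.1 hy').1, fun z hz hzy' => ?_⟩
      exact hmin' z (Finset.mem_filter.2 ⟨hz, htr hzy' hy'y⟩) hzy'

section Ord

variable {I : Type*} [Category I] [Fintype I] [∀ i j : I, Fintype (i ⟶ j)]

lemma eq_of_homs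
    (hEI : ∀ (i : I) (f : i ⟶ i), IsIso f)
    {a b : EObj I}
    (f : EHom a b) (g : EHom b a) : Nonempty (a ≅ b) := by
  have i1 : IsIso (f.m ≫ g.m) := hEI a.i _
  have i2 : IsIso (g.m ≫ f.m) := hEI b.i _
  have hfr : f.m ≫ (g.m ≫ inv (f.m ≫ g.m)) = 𝟙 a.i := by
    rw [← Category.assoc]; simp
  have hlf : (inv (g.m ≫ f.m) ≫ g.m) ≫ f.m = 𝟙 b.i := by
    rw [Category.assoc]; simp
  have hlr : inv (g.m ≫ f.m) ≫ g.m = g.m ≫ inv (f.m ≫ g.m) := by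
    calc inv (g.m ≫ f.m) ≫ g.m
        = (inv (g.m ≫ f.m) ≫ g.m) ≫ (f.m ≫ (g.m ≫ inv (f.m ≫ g.m))) := by rw [hfr]; simp
      _ = ((inv (g.m ≫ f.m) ≫ g.m) ≫ f.m) ≫ (g.m ≫ inv (f.m ≫ g.m)) := by simp
      _ = g.m ≫ inv (f.m ≫ g.m) := by rw [hlf]; simp
  have hiso : IsIso f.m := ⟨g.m ≫ inv (f.m ≫ g.m), hfr, by rw [← hlr]; exact hlf⟩
  have hw : b.h ≫ inv f.m = inv f.m ≫ a.h := by
    rw [← cancel_mono f.m]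
    simp [f.w]
  refine ⟨⟨f, ⟨inv f.m, hw⟩, ?_, ?_⟩⟩
  · apply EHom.ext
    show f.m ≫ inv f.m = 𝟙 a.i
    simp
  · apply EHom.ext
    show inv f.m ≫ f.m = 𝟙 b.i
    simp

variable (P : EObj I → Prop)

/-- The strict order on the skeleton. -/
def skelR (a b : {z : EObj I // P z}) : Prop := a ≠ b ∧ Nonempty (EHom a.1 b.1)

lemma skelR_irrefl (a : {z : EObj I // P z}) : ¬ skelR P a a := fun h => h.1 rfl

lemma skelR_trans
    (hEI : ∀ (i : I) (f : i ⟶ i), IsIso f)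
    (huniq : ∀ y y' : EObj I, P y → P y' → Nonempty (y ≅ y') → y = y')
    {a b c : {z : EObj I // P z}} (hab : skelR P a b) (hbc : skelR P b c) :
    skelR P a c := by
  obtain ⟨hab1, ⟨f⟩⟩ := hab
  obtain ⟨hbc1, ⟨g⟩⟩ := hbc
  refine ⟨?_, ⟨⟨f.m ≫ g.m, by rw [← Category.assoc, f.w, Category.assoc, g.w, ← Category.assoc]⟩⟩⟩
  rintro rfl
  exact hab1 (Subtype.ext (huniq a.1 b.1 a.2 b.2 (eq_of_homs hEI f g)))

end Ord
section Paths

variable {I : Type*} [Category I] [Fintype I] [∀ i j : I, Fintype (i ⟶ j)]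
variable (P : EObj I → Prop)

/-- Object sequences of potential nondegenerate paths. -/
noncomputable def pathSet (x y : {z : EObj I // P z}) (n : ℕ) :
    Finset (Fin (n + 1) → {z : EObj I // P z}) :=
  Finset.univ.filter (fun o => Function.Injective o ∧ o 0 = x ∧ o (Fin.last n) = y)

/-- Object sequences with all required hom-sets nonempty. -/
noncomputable def pathSet' (x y : {z : EObj I // P z}) (n : ℕ) :
    Finset (Fin (n + 1) → {z : EObj I // P z}) :=
  Finset.univ.filter (fun o => Function.Injective o ∧ o 0 = x ∧ o (Fin.last n) = y ∧
    ∀ l : Fin n, Nonempty (EHom (o l.castSucc).1 (o l.succ).1))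

variable (R : Type*) [CommRing R]

/-- The weight of an object sequence. -/
noncomputable def pathW (n : ℕ) (o : Fin (n + 1) → {z : EObj I // P z}) : R :=
  (∏ l : Fin n, ((Nat.card (EHom (o l.castSucc).1 (o l.succ).1) : ℕ) : R)) *
    ∏ l : Fin (n + 1), classRatio R (o l).1

/-- The total weight of nondegenerate paths. -/
noncomputable def pathF (x y : {z : EObj I // P z}) (n : ℕ) : R :=
  ∑ o ∈ pathSet P x y n, pathW P R n o

/-- Nondegenerate paths are equivalent to object sequences with chosen homs. -/
def pathEquiv (x y : {z : EObj I // P z}) (n : ℕ) : NDPath P x y n ≃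
    Σ o : {o : Fin (n + 1) → {z : EObj I // P z} //
      Function.Injective o ∧ o 0 = x ∧ o (Fin.last n) = y},
      ∀ l : Fin n, EHom (o.1 l.castSucc).1 (o.1 l.succ).1 where
  toFun p := ⟨⟨p.obj, p.nondeg, p.src, p.tgt⟩, p.hom⟩
  invFun q := ⟨q.1.1, q.2, q.1.2.2.1, q.1.2.2.2, q.1.2.1⟩
  left_inv p := rfl
  right_inv q := rfl

noncomputable instance (x y : {z : EObj I // P z}) (n : ℕ) : Fintype (NDPath P x y n) :=
  Fintype.ofEquiv _ (pathEquiv P x y n).symm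

lemma pathF_spec (x y : {z : EObj I // P z}) (n : ℕ) :
    (∑ᶠ p : NDPath P x y n, ∏ l : Fin (n + 1), classRatio R (p.obj l).1)
      = pathF P R x y n := by
  rw [finsum_eq_sum_of_fintype, ← Equiv.sum_comp (pathEquiv P x y n).symm
    (fun p => ∏ l : Fin (n + 1), classRatio R (p.obj l).1)]
  have h1 : ∀ q : Σ o : {o : Fin (n + 1) → {z : EObj I // P z} //
      Function.Injective o ∧ o 0 = x ∧ o (Fin.last n) = y},
      ∀ l : Fin n, EHom (o.1 l.castSucc).1 (o.1 l.succ).1,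
      (∏ l : Fin (n + 1), classRatio R (((pathEquiv P x y n).symm q).obj l).1)
        = ∏ l : Fin (n + 1), classRatio R (q.1.1 l).1 := fun q => rfl
  rw [Finset.sum_congr rfl (fun q _ => h1 q)]
  rw [← Finset.univ_sigma_univ, Finset.sum_sigma]
  have h2 : ∀ o : {o : Fin (n + 1) → {z : EObj I // P z} //
      Function.Injective o ∧ o 0 = x ∧ o (Fin.last n) = y},
      (∑ _b : ∀ l : Fin n, EHom (o.1 l.castSucc).1 (o.1 l.succ).1,
        ∏ l : Fin (n + 1), classRatio R (o.1 l).1) = pathW P R n o.1 := by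
    intro o
    rw [Finset.sum_const, Finset.card_univ, nsmul_eq_mul, pathW]
    congr 1
    rw [Fintype.card_pi]
    push_cast
    refine Finset.prod_congr rfl (fun l _ => ?_)
    rw [Nat.card_eq_fintype_card]
  rw [Finset.sum_congr rfl (fun o _ => h2 o)]
  rw [pathF, pathSet]
  exact (Finset.sum_subtype _ (fun o => by simp) (pathW P R n)).symm

end Paths
section Paths2

variable {I : Type*} [Category I] [Fintype I] [∀ i j : I, Fintype (i ⟶ j)]
variable (P : EObj I → Prop) (R : Type*) [CommRing R]

lemma pathF_zero (x y : {z : EObj I // P z}) :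
    pathF P R x y 0 = if x = y then classRatio R y.1 else 0 := by
  rcases eq_or_ne x y with rfl | hxy
  · rw [if_pos rfl]
    have hset : pathSet P x x 0 = {fun _ => x} := by
      ext o
      simp only [pathSet, Finset.mem_filter, Finset.mem_univ, true_and,
        Finset.mem_singleton]
      constructor
      · rintro ⟨-, h0, -⟩
        funext l
        have hl0 : l = 0 := Fin.ext (by have := l.isLt; omega)
        rw [hl0, h0]
      · rintro rfl
        refine ⟨fun a b _ => Fin.ext ?_, rfl, rfl⟩
        have := a.isLt; have := b.isLt; omega
    rw [pathF, hset, Finset.sum_singleton, pathW]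
    simp
  · rw [if_neg hxy, pathF]
    apply Finset.sum_eq_zero
    intro o ho
    exfalso
    simp only [pathSet, Finset.mem_filter] at ho
    obtain ⟨-, -, h0, hl⟩ := ho
    apply hxy
    rw [← h0, ← hl]
    congr 1

lemma pathF_vanish (x y : {z : EObj I // P z}) (n : ℕ)
    (hn : Fintype.card {z : EObj I // P z} ≤ n) : pathF P R x y n = 0 := by
  apply Finset.sum_eq_zero
  intro o ho
  exfalso
  simp only [pathSet, Finset.mem_filter] at ho
  have := Fintype.card_le_of_injective o ho.2.1
  simp only [Fintype.card_fin] at this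
  omega

lemma pathF_eq' (x y : {z : EObj I // P z}) (n : ℕ) :
    pathF P R x y n = ∑ o ∈ pathSet' P x y n, pathW P R n o := by
  refine (Finset.sum_subset ?_ ?_).symm
  · intro o ho
    simp only [pathSet', Finset.mem_filter] at ho
    simp only [pathSet, Finset.mem_filter]
    exact ⟨ho.1, ho.2.1, ho.2.2.1, ho.2.2.2.1⟩
  · intro o ho ho'
    simp only [pathSet, Finset.mem_filter] at ho
    simp only [pathSet', Finset.mem_filter] at ho'
    push_neg at ho'
    obtain ⟨l, hl⟩ := ho' ho.1 ho.2.1 ho.2.2.1 ho.2.2.2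
    have : IsEmpty (EHom (o l.castSucc).1 (o l.succ).1) := hl
    rw [pathW]
    have hz : ((Nat.card (EHom (o l.castSucc).1 (o l.succ).1) : ℕ) : R) = 0 := by
      rw [Nat.card_of_isEmpty]; exact Nat.cast_zero
    rw [Finset.prod_eq_zero (Finset.mem_univ l) hz, zero_mul]

lemma chain_hom {x y : {z : EObj I // P z}} {n : ℕ}
    {o : Fin (n + 1) → {z : EObj I // P z}} (ho : o ∈ pathSet' P x y n) :
    ∀ m l : Fin (n + 1), l < m → Nonempty (EHom (o l).1 (o m).1) := by
  simp only [pathSet', Finset.mem_filter] at ho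
  obtain ⟨-, -, -, -, h4⟩ := ho
  intro m
  induction m using Fin.induction with
  | zero => exact fun l hl => absurd hl (Nat.not_lt_zero _)
  | succ i ih =>
    intro l hl
    have hle : l.1 ≤ i.1 := by
      have := hl
      simp only [Fin.lt_def, Fin.val_succ] at this
      omega
    rcases eq_or_lt_of_le hle with heq | hlt
    · have : l = i.castSucc := by
        apply Fin.ext
        simpa using heq
      rw [this]
      exact h4 i
    · have hlc : l < i.castSucc := by
        simp only [Fin.lt_def, Fin.coe_castSucc]
        exact hlt
      obtain ⟨f⟩ := ih l hlc
      obtain ⟨g⟩ := h4 i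
      exact ⟨⟨f.m ≫ g.m, by
        rw [← Category.assoc, f.w, Category.assoc, g.w, ← Category.assoc]⟩⟩

end Paths2
section Paths3

variable {I : Type*} [Category I] [Fintype I] [∀ i j : I, Fintype (i ⟶ j)]
variable (P : EObj I → Prop) (R : Type*) [CommRing R]

lemma pathF_succ
    (hEI : ∀ (i : I) (f : i ⟶ i), IsIso f)
    (huniq : ∀ y y' : EObj I, P y → P y' → Nonempty (y ≅ y') → y = y')
    (x y : {z : EObj I // P z}) (n : ℕ) :
    pathF P R x y (n + 1) =
      (∑ z : {z : EObj I // P z},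
        (if z = y then 0 else ((Nat.card (EHom z.1 y.1) : ℕ) : R)) * pathF P R x z n)
        * classRatio R y.1 := by
  classical
  set X : Finset {z : EObj I // P z} := Finset.univ.filter (fun z => skelR P z y) with hX
  have hmemX : ∀ z : {z : EObj I // P z}, z ∈ X ↔ skelR P z y := by
    intro z; simp [hX]
  -- step 1 : restrict the sum over `z` to `X`
  have step1 : (∑ z : {z : EObj I // P z},
      (if z = y then 0 else ((Nat.card (EHom z.1 y.1) : ℕ) : R)) * pathF P R x z n)
      = ∑ z ∈ X, ((Nat.card (EHom z.1 y.1) : ℕ) : R) * pathF P R x z n := by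
    rw [← Finset.sum_subset (Finset.subset_univ X) ?van]
    · refine Finset.sum_congr rfl (fun z hz => ?_)
      rw [if_neg ((hmemX z).1 hz).1]
    case van =>
      intro z _ hz
      rw [hmemX] at hz
      by_cases hzy : z = y
      · rw [if_pos hzy, zero_mul]
      · have hno : ¬ Nonempty (EHom z.1 y.1) := fun hne => hz ⟨hzy, hne⟩
        have : Nat.card (EHom z.1 y.1) = 0 := by
          have := not_nonempty_iff.1 hno
          exact Nat.card_of_isEmpty
        rw [if_neg hzy, this, Nat.cast_zero, zero_mul]
  rw [step1]
  -- step 2 : express everything via `pathSet'` and flatten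
  have step2 : (∑ z ∈ X, ((Nat.card (EHom z.1 y.1) : ℕ) : R) * pathF P R x z n)
      * classRatio R y.1
      = ∑ p ∈ X.sigma (fun z => pathSet' P x z n),
          ((Nat.card (EHom p.1.1 y.1) : ℕ) : R) * pathW P R n p.2 * classRatio R y.1 := by
    rw [Finset.sum_mul, Finset.sum_sigma]
    refine (Finset.sum_congr rfl (fun z hz => ?_)).symm
    rw [pathF_eq', Finset.mul_sum, Finset.sum_mul]
  rw [step2, pathF_eq']
  -- step 3 : the bijection
  refine (Finset.sum_bij'
    (i := fun p _ => Fin.snoc p.2 y)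
    (j := fun o _ => ⟨o (Fin.castSucc (Fin.last n)), fun l => o l.castSucc⟩)
    ?_ ?_ ?_ ?_ ?_).symm
  · -- i maps into pathSet'
    rintro ⟨z, o⟩ hp
    rw [Finset.mem_sigma] at hp
    obtain ⟨hzX, ho⟩ := hp
    have hz : skelR P z y := (hmemX z).1 hzX
    simp only [pathSet', Finset.mem_filter, Finset.mem_univ, true_and] at ho ⊢
    obtain ⟨hinj, h0, hlast, hhom⟩ := ho
    -- no object of `o` equals `y`
    have hne : ∀ l : Fin (n + 1), o l ≠ y := by
      intro l hly
      rcases eq_or_ne l (Fin.last n) with rfl | hl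
      · exact hz.1 (hlast ▸ hly ▸ rfl)
      · have hlt : l < Fin.last n := lt_of_le_of_ne (Fin.le_last l) hl
        obtain ⟨f⟩ := chain_hom P (by
          simp only [pathSet', Finset.mem_filter, Finset.mem_univ, true_and]
          exact ⟨hinj, h0, hlast, hhom⟩) (Fin.last n) l hlt
        have holz : skelR P (o l) z := by
          refine ⟨fun he => hl (hinj (he.trans hlast.symm)), ?_⟩
          rw [← hlast]; exact ⟨f⟩
        exact (skelR_trans P hEI huniq holz hz).1 hly
    refine ⟨?_, ?_, ?_, ?_⟩
    · -- injectivity of the snoc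
      intro a b hab
      rcases Fin.eq_castSucc_or_eq_last a with ⟨a', rfl⟩ | rfl <;>
        rcases Fin.eq_castSucc_or_eq_last b with ⟨b', rfl⟩ | rfl
      · rw [Fin.snoc_castSucc, Fin.snoc_castSucc] at hab
        rw [hinj hab]
      · rw [Fin.snoc_castSucc, Fin.snoc_last] at hab
        exact absurd hab (hne a')
      · rw [Fin.snoc_castSucc, Fin.snoc_last] at hab
        exact absurd hab.symm (hne b')
      · rfl
    · rw [show (0 : Fin (n + 2)) = Fin.castSucc 0 from rfl, Fin.snoc_castSucc]
      exact h0
    · exact Fin.snoc_last _ _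
    · intro l
      rcases Fin.eq_castSucc_or_eq_last l with ⟨j, rfl⟩ | rfl
      · rw [Fin.snoc_castSucc, Fin.succ_castSucc, Fin.snoc_castSucc]
        exact hhom j
      · rw [Fin.snoc_castSucc, Fin.succ_last, Fin.snoc_last, hlast]
        exact hz.2
  · -- j maps into the sigma set
    intro o ho
    simp only [pathSet', Finset.mem_filter, Finset.mem_univ, true_and] at ho
    obtain ⟨hinj, h0, hlast, hhom⟩ := ho
    rw [Finset.mem_sigma]
    constructor
    · rw [hmemX]
      refine ⟨?_, ?_⟩
      · intro he
        have : Fin.castSucc (Fin.last n) = Fin.last (n + 1) :=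
          hinj (he.trans hlast.symm)
        exact absurd this (Fin.castSucc_lt_last _).ne
      · have := hhom (Fin.last n)
        rwa [Fin.succ_last, hlast] at this
    · simp only [pathSet', Finset.mem_filter, Finset.mem_univ, true_and]
      refine ⟨fun a b hab => Fin.castSucc_injective _ (hinj hab), ?_, ?_⟩
      · show o (Fin.castSucc 0) = x
        rw [show (Fin.castSucc 0 : Fin (n + 2)) = 0 from rfl]
        exact h0
      · intro l
        show Nonempty (EHom (o l.castSucc.castSucc).1 (o l.succ.castSucc).1)
        have := hhom l.castSucc
        rwa [Fin.succ_castSucc] at this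
  · -- left inverse
    rintro ⟨z, o⟩ hp
    rw [Finset.mem_sigma] at hp
    obtain ⟨hzX, ho⟩ := hp
    simp only [pathSet', Finset.mem_filter, Finset.mem_univ, true_and] at ho
    refine Sigma.ext ?_ (heq_of_eq ?_)
    · show (Fin.snoc o y : Fin (n + 2) → _) (Fin.last n).castSucc = z
      rw [Fin.snoc_castSucc]
      exact ho.2.2.1
    · show (fun l : Fin (n + 1) => (Fin.snoc o y : Fin (n + 2) → _) l.castSucc) = o
      funext l
      exact Fin.snoc_castSucc _ _ _
  · -- right inverse
    intro o ho
    simp only [pathSet', Finset.mem_filter, Finset.mem_univ, true_and] at ho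
    funext a
    rcases Fin.eq_castSucc_or_eq_last a with ⟨a', rfl⟩ | rfl
    · show (Fin.snoc (fun l : Fin (n + 1) => o l.castSucc) y : Fin (n + 2) → _) a'.castSucc
        = o a'.castSucc
      rw [Fin.snoc_castSucc]
    · show (Fin.snoc (fun l : Fin (n + 1) => o l.castSucc) y : Fin (n + 2) → _) (Fin.last (n + 1))
        = o (Fin.last (n + 1))
      rw [Fin.snoc_last]
      exact ho.2.2.1.symm
  · -- weights agree
    rintro ⟨z, o⟩ hp
    rw [Finset.mem_sigma] at hp
    obtain ⟨hzX, ho⟩ := hp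
    simp only [pathSet', Finset.mem_filter, Finset.mem_univ, true_and] at ho
    obtain ⟨hinj, h0, hlast, hhom⟩ := ho
    show ((Nat.card (EHom z.1 y.1) : ℕ) : R) * pathW P R n o * classRatio R y.1
      = pathW P R (n + 1) (Fin.snoc o y)
    rw [pathW, pathW]
    rw [Fin.prod_univ_castSucc
      (f := fun l : Fin (n + 1) => ((Nat.card (EHom ((Fin.snoc o y : Fin (n+2) → _) l.castSucc).1
        ((Fin.snoc o y : Fin (n+2) → _) l.succ).1) : ℕ) : R))]
    rw [Fin.prod_univ_castSucc
      (f := fun l : Fin (n + 2) => classRatio R ((Fin.snoc o y : Fin (n+2) → _) l).1)]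
    have e1 : (∏ l : Fin n, ((Nat.card (EHom ((Fin.snoc o y : Fin (n+2) → _) l.castSucc.castSucc).1
        ((Fin.snoc o y : Fin (n+2) → _) l.castSucc.succ).1) : ℕ) : R))
        = ∏ l : Fin n, ((Nat.card (EHom (o l.castSucc).1 (o l.succ).1) : ℕ) : R) := by
      refine Finset.prod_congr rfl (fun l _ => ?_)
      rw [Fin.succ_castSucc, Fin.snoc_castSucc, Fin.snoc_castSucc]
    have e2 : ((Nat.card (EHom ((Fin.snoc o y : Fin (n+2) → _) (Fin.last n).castSucc).1
        ((Fin.snoc o y : Fin (n+2) → _) (Fin.last n).succ).1) : ℕ) : R)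
        = ((Nat.card (EHom z.1 y.1) : ℕ) : R) := by
      rw [Fin.succ_last, Fin.snoc_castSucc, Fin.snoc_last, hlast]
    have e3 : (∏ l : Fin (n + 1), classRatio R ((Fin.snoc o y : Fin (n+2) → _) l.castSucc).1)
        = ∏ l : Fin (n + 1), classRatio R (o l).1 := by
      refine Finset.prod_congr rfl (fun l _ => ?_)
      rw [Fin.snoc_castSucc]
    have e4 : classRatio R ((Fin.snoc o y : Fin (n+2) → _) (Fin.last (n+1))).1
        = classRatio R y.1 := by rw [Fin.snoc_last]
    rw [e1, e2, e3, e4]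
    ring

end Paths3
section Assemble

variable {I : Type*} [Category I] [Fintype I] [∀ i j : I, Fintype (i ⟶ j)]
variable (P : EObj I → Prop) (R : Type*) [CommRing R]

lemma sum_split (f : {z : EObj I // P z} → R) (y : {z : EObj I // P z}) :
    ∑ x, f x = f y + ∑ x, (if x = y then 0 else f x) := by
  classical
  have h1 : ∀ x, f x = (if x = y then f x else 0) + (if x = y then 0 else f x) := by
    intro x; by_cases hx : x = y <;> simp [hx]
  rw [Finset.sum_congr rfl (fun x _ => h1 x), Finset.sum_add_distrib]
  congr 1
  simp

lemma telescope (a : ℕ → R) (K : ℕ) :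
    ∑ n ∈ Finset.range K, (-1 : R) ^ n * (a n + a (n + 1))
      = a 0 - (-1 : R) ^ K * a K := by
  induction K with
  | zero => simp
  | succ K ih => rw [Finset.sum_range_succ, ih, pow_succ]; ring

lemma leinster_eq (y : {z : EObj I // P z}) :
    leinsterCoweighting R P y = ∑ x : {z : EObj I // P z},
      ∑ n ∈ Finset.range (Fintype.card {z : EObj I // P z}), (-1 : R) ^ n * pathF P R x y n := by
  rw [leinsterCoweighting, finsum_eq_sum_of_fintype]
  refine Finset.sum_congr rfl (fun x _ => ?_)
  have h1 : (fun n : ℕ => (-1 : R) ^ n * ∑ᶠ p : NDPath P x y n,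
      ∏ l : Fin (n + 1), classRatio R (p.obj l).1)
      = fun n : ℕ => (-1 : R) ^ n * pathF P R x y n := by
    funext n; rw [pathF_spec]
  rw [h1]
  refine finsum_eq_finset_sum_of_support_subset _ (fun n hn => ?_)
  simp only [Function.mem_support] at hn
  simp only [Finset.coe_range, Set.mem_Iio]
  by_contra hK
  push_neg at hK
  rw [pathF_vanish P R x y n hK, mul_zero] at hn
  exact hn rfl

lemma key_delta
    (hEI : ∀ (i : I) (f : i ⟶ i), IsIso f)
    (hchar : ∀ p : ℕ, p.Prime → (∃ i : I, p ∣ Nat.card (i ⟶ i)) → IsUnit ((p : ℕ) : R))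
    (huniq : ∀ y y' : EObj I, P y → P y' → Nonempty (y ≅ y') → y = y')
    (w y : {z : EObj I // P z}) :
    ∑ x : {z : EObj I // P z},
      (∑ n ∈ Finset.range (Fintype.card {z : EObj I // P z}), (-1 : R) ^ n * pathF P R w x n)
        * ((Nat.card (EHom x.1 y.1) : ℕ) : R)
      = if w = y then 1 else 0 := by
  classical
  set K := Fintype.card {z : EObj I // P z} with hK
  have hdρ := diag_mul_classRatio hEI R hchar y.1
  calc ∑ x : {z : EObj I // P z},
      (∑ n ∈ Finset.range K, (-1 : R) ^ n * pathF P R w x n)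
        * ((Nat.card (EHom x.1 y.1) : ℕ) : R)
      = ∑ x : {z : EObj I // P z}, ∑ n ∈ Finset.range K,
          (-1 : R) ^ n * (pathF P R w x n * ((Nat.card (EHom x.1 y.1) : ℕ) : R)) := by
        refine Finset.sum_congr rfl (fun x _ => ?_)
        rw [Finset.sum_mul]
        exact Finset.sum_congr rfl (fun n _ => by ring)
    _ = ∑ n ∈ Finset.range K, (-1 : R) ^ n *
          ∑ x : {z : EObj I // P z}, pathF P R w x n * ((Nat.card (EHom x.1 y.1) : ℕ) : R) := by
        rw [Finset.sum_comm]
        exact Finset.sum_congr rfl (fun n _ => (Finset.mul_sum _ _ _).symm)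
    _ = ∑ n ∈ Finset.range K, (-1 : R) ^ n *
          ((pathF P R w y n + pathF P R w y (n + 1)) * ((Nat.card (EHom y.1 y.1) : ℕ) : R)) := by
        refine Finset.sum_congr rfl (fun n _ => ?_)
        congr 1
        rw [sum_split P R (fun x => pathF P R w x n * ((Nat.card (EHom x.1 y.1) : ℕ) : R)) y]
        have h2 : ∑ x : {z : EObj I // P z},
            (if x = y then 0 else pathF P R w x n * ((Nat.card (EHom x.1 y.1) : ℕ) : R))
            = ∑ x : {z : EObj I // P z},
              (if x = y then 0 else ((Nat.card (EHom x.1 y.1) : ℕ) : R)) * pathF P R w x n := by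
          refine Finset.sum_congr rfl (fun x _ => ?_)
          by_cases hx : x = y <;> simp [hx, mul_comm]
        have h3 : (∑ x : {z : EObj I // P z},
            (if x = y then 0 else ((Nat.card (EHom x.1 y.1) : ℕ) : R)) * pathF P R w x n)
            = pathF P R w y (n + 1) * ((Nat.card (EHom y.1 y.1) : ℕ) : R) := by
          rw [pathF_succ P R hEI huniq w y n, mul_assoc,
            mul_comm (classRatio R y.1) _, hdρ, mul_one]
        rw [h2, h3]
        ring
    _ = (∑ n ∈ Finset.range K, (-1 : R) ^ n *
          (pathF P R w y n + pathF P R w y (n + 1))) * ((Nat.card (EHom y.1 y.1) : ℕ) : R) := by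
        rw [Finset.sum_mul]
        exact Finset.sum_congr rfl (fun n _ => by ring)
    _ = (pathF P R w y 0 - (-1 : R) ^ K * pathF P R w y K)
          * ((Nat.card (EHom y.1 y.1) : ℕ) : R) := by
        rw [telescope]
    _ = pathF P R w y 0 * ((Nat.card (EHom y.1 y.1) : ℕ) : R) := by
        rw [pathF_vanish P R w y K (le_of_eq hK.symm)]
        ring
    _ = if w = y then 1 else 0 := by
        rw [pathF_zero]
        by_cases hw : w = y
        · rw [if_pos hw, if_pos hw, mul_comm]
          exact hdρ
        · rw [if_neg hw, if_neg hw, zero_mul]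

end Assemble
/-- Let `I` be a finite EI-category and `R` a commutative ring in which
the characteristic of `I` is invertible (every prime dividing some `#G_i` is invertible).
For any skeleton `J` of the endomorphism category `E(I)` (cut out by the predicate `P`),
the coefficients `λ_{(j,k)}` given by the alternating sum over non-degenerate paths form
the unique `R`-coweighting on `J`. -/
theorem stmt_18 {I : Type*} [Category I] [Fintype I] [∀ i j : I, Fintype (i ⟶ j)]
    (hEI : ∀ (i : I) (f : i ⟶ i), IsIso f)
    (R : Type*) [CommRing R]
    (hchar : ∀ p : ℕ, p.Prime → (∃ i : I, p ∣ Nat.card (i ⟶ i)) → IsUnit ((p : ℕ) : R))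
    (P : EObj I → Prop)
    (hex : ∀ x : EObj I, ∃ y : EObj I, P y ∧ Nonempty (x ≅ y))
    (huniq : ∀ y y' : EObj I, P y → P y' → Nonempty (y ≅ y') → y = y') :
    (∀ y : {z : EObj I // P z},
      ∑ᶠ x : {z : EObj I // P z},
        leinsterCoweighting R P x * ((Nat.card ((x : EObj I) ⟶ (y : EObj I)) : ℕ) : R)
          = 1) ∧
    ∀ mu : {z : EObj I // P z} → R,
      (∀ y : {z : EObj I // P z},
        ∑ᶠ x : {z : EObj I // P z},
          mu x * ((Nat.card ((x : EObj I) ⟶ (y : EObj I)) : ℕ) : R) = 1) →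
      mu = leinsterCoweighting R P := by
  classical
  have hcast : ∀ x y : {z : EObj I // P z},
      ((Nat.card ((x : EObj I) ⟶ (y : EObj I)) : ℕ) : R)
        = ((Nat.card (EHom x.1 y.1) : ℕ) : R) := fun _ _ => rfl
  set K := Fintype.card {z : EObj I // P z} with hK
  have hex1 : ∀ y : {z : EObj I // P z},
      ∑ᶠ x : {z : EObj I // P z},
        leinsterCoweighting R P x * ((Nat.card ((x : EObj I) ⟶ (y : EObj I)) : ℕ) : R) = 1 := by
    intro y
    rw [finsum_eq_sum_of_fintype]
    calc ∑ x : {z : EObj I // P z},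
        leinsterCoweighting R P x * ((Nat.card ((x : EObj I) ⟶ (y : EObj I)) : ℕ) : R)
        = ∑ x : {z : EObj I // P z}, ∑ w : {z : EObj I // P z},
            (∑ n ∈ Finset.range K, (-1 : R) ^ n * pathF P R w x n)
              * ((Nat.card (EHom x.1 y.1) : ℕ) : R) := by
          refine Finset.sum_congr rfl (fun x _ => ?_)
          rw [hcast, leinster_eq, Finset.sum_mul]
      _ = ∑ w : {z : EObj I // P z}, ∑ x : {z : EObj I // P z},
            (∑ n ∈ Finset.range K, (-1 : R) ^ n * pathF P R w x n)
              * ((Nat.card (EHom x.1 y.1) : ℕ) : R) := Finset.sum_comm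
      _ = ∑ w : {z : EObj I // P z}, if w = y then (1 : R) else 0 := by
          refine Finset.sum_congr rfl (fun w _ => ?_)
          rw [hK]
          exact key_delta P R hEI hchar huniq w y
      _ = 1 := by simp
  refine ⟨hex1, ?_⟩
  intro mu hmu
  set ν : {z : EObj I // P z} → R := fun x => mu x - leinsterCoweighting R P x with hν
  have hνsum : ∀ y : {z : EObj I // P z},
      ∑ x : {z : EObj I // P z}, ν x * ((Nat.card (EHom x.1 y.1) : ℕ) : R) = 0 := by
    intro y
    have h1 := hmu y
    have h2 := hex1 y
    rw [finsum_eq_sum_of_fintype] at h1 h2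
    calc ∑ x : {z : EObj I // P z}, ν x * ((Nat.card (EHom x.1 y.1) : ℕ) : R)
        = (∑ x : {z : EObj I // P z},
            mu x * ((Nat.card ((x : EObj I) ⟶ (y : EObj I)) : ℕ) : R))
          - ∑ x : {z : EObj I // P z},
            leinsterCoweighting R P x * ((Nat.card ((x : EObj I) ⟶ (y : EObj I)) : ℕ) : R) := by
          rw [← Finset.sum_sub_distrib]
          refine Finset.sum_congr rfl (fun x _ => ?_)
          rw [hcast, hν, sub_mul]
      _ = 0 := by rw [h1, h2, sub_self]
  have hzero : ∀ x, ν x = 0 := by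
    by_contra hc
    push_neg at hc
    obtain ⟨x0, hx0⟩ := hc
    set s := Finset.univ.filter (fun x => ν x ≠ 0) with hs
    have hsne : s.Nonempty := ⟨x0, by simp [hs, hx0]⟩
    obtain ⟨y0, hy0s, hy0min⟩ := exists_rel_min (skelR P)
      (fun hab hbc => skelR_trans P hEI huniq hab hbc) (skelR_irrefl P) s hsne
    have hy0 : ν y0 ≠ 0 := (Finset.mem_filter.1 hy0s).2
    have heq := hνsum y0
    rw [sum_split P R (fun x => ν x * ((Nat.card (EHom x.1 y0.1) : ℕ) : R)) y0] at heq
    have hrest : ∑ x : {z : EObj I // P z},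
        (if x = y0 then 0 else ν x * ((Nat.card (EHom x.1 y0.1) : ℕ) : R)) = 0 := by
      apply Finset.sum_eq_zero
      intro x _
      by_cases hx : x = y0
      · rw [if_pos hx]
      · rw [if_neg hx]
        by_cases hνx : ν x = 0
        · rw [hνx, zero_mul]
        · have hxs : x ∈ s := by simp [hs, hνx]
          by_cases hne : Nonempty (EHom x.1 y0.1)
          · exact absurd ⟨hx, hne⟩ (hy0min x hxs)
          · have h0 : Nat.card (EHom x.1 y0.1) = 0 := by
              have := not_nonempty_iff.1 hne
              exact Nat.card_of_isEmpty
            rw [h0, Nat.cast_zero, mul_zero]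
    rw [hrest, add_zero] at heq
    have hd := isUnit_diag hEI R hchar y0.1
    apply hy0
    calc ν y0 = ν y0 * (((Nat.card (EHom y0.1 y0.1) : ℕ) : R)
        * Ring.inverse ((Nat.card (EHom y0.1 y0.1) : ℕ) : R)) := by
          rw [Ring.mul_inverse_cancel _ hd, mul_one]
      _ = (ν y0 * ((Nat.card (EHom y0.1 y0.1) : ℕ) : R))
            * Ring.inverse ((Nat.card (EHom y0.1 y0.1) : ℕ) : R) := by ring
      _ = 0 := by rw [heq, zero_mul]
  funext x
  have := hzero x
  rw [hν] at this
  exact sub_eq_zero.1 this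
end
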